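/- Let p and q be distinct odd primes. Then the pair (p,q) is isotropic over ℚ_p (i.e. there exists (x,y,z) ∈ ℚ_p³ with (x,y,z) ≠ (0,0,0) and z² = p·x² + q·y²) if and only if the Legendre symbol (q/p) equals 1. -/

import Mathlib

open Padic

section aux
variable {p : ℕ} [Fact p.Prime]

private lemma pp1 : (1:ℝ) < p := by exact_mod_cast (Fact.out : p.Prime).one_lt

private lemma pow_val_inj {m n : ℤ} (h : (p:ℝ)^m = (p:ℝ)^n) : m = n := by
  have h1 := (zpow_le_zpow_iff_right₀ (pp1 (p := p))).mp h.le
  have h2 := (zpow_le_zpow_iff_right₀ (pp1 (p := p))).mp h.ge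
  omega

private lemma val_sq {a : ℚ_[p]} (ha : a ≠ 0) : (a^2).valuation = 2 * a.valuation := by
  rw [sq, Padic.valuation_mul ha ha]; ring

private lemma val_neg (a : ℚ_[p]) : (-a).valuation = a.valuation := by
  by_cases ha : a = 0
  · simp [ha]
  · have hna : (-a) ≠ 0 := neg_ne_zero.mpr ha
    have : ‖-a‖ = ‖a‖ := norm_neg a
    rw [Padic.norm_eq_zpow_neg_valuation hna, Padic.norm_eq_zpow_neg_valuation ha] at this
    have := pow_val_inj this
    omega

private lemma val_p_mul_sq {b : ℚ_[p]} (hb : b ≠ 0) :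
    ((p:ℚ_[p]) * b^2).valuation = 1 + 2 * b.valuation := by
  have hp0 : (p:ℚ_[p]) ≠ 0 := by
    exact_mod_cast Nat.cast_ne_zero.mpr (Fact.out : p.Prime).ne_zero
  rw [Padic.valuation_mul hp0 (pow_ne_zero 2 hb), Padic.valuation_p, val_sq hb]

private lemma toZMod_eq_zero_iff (x : ℤ_[p]) : PadicInt.toZMod x = 0 ↔ ‖x‖ < 1 := by
  rw [← RingHom.mem_ker, PadicInt.ker_toZMod, PadicInt.maximalIdeal_eq_span_p,
    Ideal.mem_span_singleton, ← PadicInt.norm_lt_one_iff_dvd]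

end aux

/-- For distinct odd primes `p`, `q`, the pair `(p, q)` is isotropic over
`ℚ_p` if and only if the Legendre symbol `(q/p)` equals `1`. -/
theorem isotropic_at_p_iff_legendre (p q : ℕ) [Fact p.Prime] [Fact q.Prime]
    (hp : p ≠ 2) (hq : q ≠ 2) (hpq : p ≠ q) :
    (∃ x y z : ℚ_[p], (x, y, z) ≠ (0, 0, 0) ∧
        z ^ 2 = (p : ℚ_[p]) * x ^ 2 + (q : ℚ_[p]) * y ^ 2)
      ↔ legendreSym p (q : ℤ) = 1 := by
  have hpp : p.Prime := Fact.out
  have hqp : q.Prime := Fact.out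
  have hndvd : ¬ p ∣ q := fun h => hpq ((Nat.prime_dvd_prime_iff_eq hpp hqp).mp h)
  have hq0 : ((q:ℕ) : ZMod p) ≠ 0 := by
    intro h
    exact hndvd ((ZMod.natCast_eq_zero_iff q p).mp h)
  rw [legendreSym.eq_one_iff' p hq0]
  have hqQ : ((q:ℕ) : ℚ_[p]) ≠ 0 := Nat.cast_ne_zero.mpr hqp.ne_zero
  have hqv : ((q:ℕ) : ℚ_[p]).valuation = 0 := by
    rw [Padic.valuation_natCast, padicValNat.eq_zero_of_not_dvd hndvd]; rfl
  have hqnorm : ‖((q:ℕ) : ℚ_[p])‖ = 1 := by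
    rw [Padic.norm_eq_zpow_neg_valuation hqQ, hqv]; simp
  constructor
  · rintro ⟨x, y, z, hne, heq⟩
    -- y ≠ 0
    have hy : y ≠ 0 := by
      rintro rfl
      rw [show (0:ℚ_[p])^2 = 0 by ring, mul_zero, add_zero] at heq
      by_cases hx : x = 0
      · have hz : z = 0 := by
          have : z ^ 2 = 0 := by rw [heq, hx]; ring
          exact pow_eq_zero_iff (by norm_num) |>.mp this
        subst hx; subst hz; exact hne rfl
      · have hz : z ≠ 0 := by
          intro hz0
          rw [hz0] at heq
          have : (p:ℚ_[p]) * x^2 = 0 := by rw [← heq]; ring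
          rcases mul_eq_zero.mp this with h | h
          · exact Nat.cast_ne_zero.mpr hpp.ne_zero h
          · exact hx (pow_eq_zero_iff (by norm_num) |>.mp h)
        have hv := congrArg Padic.valuation heq
        rw [val_sq hz, val_p_mul_sq hx] at hv
        omega
    set w : ℚ_[p] := z / y with hwdef
    set u : ℚ_[p] := x / y with hudef
    have hqe : ((q:ℕ) : ℚ_[p]) = w^2 - (p:ℚ_[p]) * u^2 := by
      rw [hwdef, hudef,
        show (z/y)^2 - (p:ℚ_[p])*(x/y)^2 = (z^2 - (p:ℚ_[p])*x^2)/y^2 from by ring,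
        eq_div_iff (pow_ne_zero 2 hy)]
      linear_combination -heq
    -- w ≠ 0
    have hw : w ≠ 0 := by
      intro hw0
      rw [hw0] at hqe
      by_cases hu : u = 0
      · rw [hu] at hqe; simp at hqe; exact hqp.ne_zero hqe
      · have hqe' : ((q:ℕ) : ℚ_[p]) = -((p:ℚ_[p]) * u^2) := by rw [hqe]; ring
        have hv := congrArg Padic.valuation hqe'
        rw [hqv, val_neg, val_p_mul_sq hu] at hv
        omega
    -- valuation facts
    have hwv : w.valuation = 0 ∧ ‖u‖ ≤ 1 := by
      by_cases hu : u = 0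
      · rw [hu] at hqe
        have hv := congrArg Padic.valuation hqe
        rw [hqv, show w^2 - (p:ℚ_[p])*0^2 = w^2 by ring, val_sq hw] at hv
        exact ⟨by omega, by simp [hu]⟩
      · have hB : (p:ℚ_[p]) * u^2 ≠ 0 := by
          intro h
          rcases mul_eq_zero.mp h with h | h
          · exact Nat.cast_ne_zero.mpr hpp.ne_zero h
          · exact hu (pow_eq_zero_iff (by norm_num) |>.mp h)
        have hne' : ‖w^2‖ ≠ ‖-((p:ℚ_[p]) * u^2)‖ := by
          rw [norm_neg, Padic.norm_eq_zpow_neg_valuation (pow_ne_zero 2 hw), Padic.norm_eq_zpow_neg_valuation hB,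
            val_sq hw, val_p_mul_sq hu]
          intro h
          have := pow_val_inj h
          omega
        have hmax : ‖((q:ℕ) : ℚ_[p])‖ = max ‖w^2‖ ‖-((p:ℚ_[p]) * u^2)‖ := by
          rw [hqe, sub_eq_add_neg]
          exact Padic.add_eq_max_of_ne hne'
        rw [hqnorm, norm_neg] at hmax
        have hBne1 : ‖(p:ℚ_[p]) * u^2‖ ≠ 1 := by
          rw [Padic.norm_eq_zpow_neg_valuation hB, val_p_mul_sq hu]
          intro h
          have : ((p:ℝ))^(-(1 + 2*u.valuation)) = (p:ℝ)^(0:ℤ) := by rw [h]; simp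
          have := pow_val_inj this
          omega
        have hWn : ‖w^2‖ = 1 := by
          rcases max_cases ‖w^2‖ ‖(p:ℚ_[p]) * u^2‖ with ⟨h1, h2⟩ | ⟨h1, h2⟩
          · rw [h1] at hmax; exact hmax.symm
          · rw [h1] at hmax; exact absurd hmax.symm hBne1
        have hBle : ‖(p:ℚ_[p]) * u^2‖ ≤ 1 := by
          rw [hmax]; exact le_max_right _ _
        constructor
        · rw [Padic.norm_eq_zpow_neg_valuation (pow_ne_zero 2 hw), val_sq hw] at hWn
          have : ((p:ℝ))^(-(2 * w.valuation)) = (p:ℝ)^(0:ℤ) := by rw [hWn]; simp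
          have := pow_val_inj this
          omega
        · rw [Padic.norm_le_one_iff_val_nonneg]
          rw [Padic.norm_eq_zpow_neg_valuation hB, val_p_mul_sq hu,
            show (1:ℝ) = (p:ℝ)^(0:ℤ) by simp] at hBle
          have := (zpow_le_zpow_iff_right₀ (pp1 (p := p))).mp hBle
          omega
    obtain ⟨hwv0, hule⟩ := hwv
    have hwle : ‖w‖ ≤ 1 := by
      rw [Padic.norm_le_one_iff_val_nonneg, hwv0]
    set W : ℤ_[p] := ⟨w, hwle⟩ with hWdef
    set U : ℤ_[p] := ⟨u, hule⟩ with hUdef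
    have hZeq : ((q:ℕ) : ℤ_[p]) = W^2 - (p:ℤ_[p]) * U^2 := by
      apply Subtype.ext
      push_cast
      exact hqe
    have hZm := congrArg PadicInt.toZMod hZeq
    rw [map_natCast, map_sub, map_mul, map_pow, map_natCast,
      ZMod.natCast_self, zero_mul, sub_zero] at hZm
    exact ⟨PadicInt.toZMod W, by rw [hZm]; ring⟩
  · rintro ⟨a, ha⟩
    have ha0 : a ≠ 0 := by
      intro h
      rw [h, mul_zero] at ha
      exact hq0 ha
    set A : ℤ_[p] := ((a.val : ℕ) : ℤ_[p]) with hAdef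
    have hAz : PadicInt.toZMod A = a := by
      rw [hAdef, map_natCast, ZMod.natCast_zmod_val]
    set F : Polynomial ℤ_[p] := Polynomial.X^2 - Polynomial.C ((q:ℕ) : ℤ_[p]) with hFdef
    have hFeval : F.eval A = A^2 - ((q:ℕ) : ℤ_[p]) := by simp [hFdef]
    have hFder : F.derivative.eval A = 2 * A := by
      simp [hFdef, Polynomial.derivative_sub, Polynomial.derivative_X_pow, one_add_one_eq_two]
    have h2a : PadicInt.toZMod (2 * A) ≠ 0 := by
      have h2cast : (2:ℤ_[p]) = ((2:ℕ) : ℤ_[p]) := by norm_num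
      rw [map_mul, hAz, h2cast, map_natCast]
      intro h
      rcases mul_eq_zero.mp h with h | h
      · have h2 := (ZMod.natCast_eq_zero_iff 2 p).mp h
        exact hp ((Nat.prime_dvd_prime_iff_eq hpp Nat.prime_two).mp h2)
      · exact ha0 h
    have hder_norm : ‖F.derivative.eval A‖ = 1 := by
      rw [hFder]
      refine le_antisymm (PadicInt.norm_le_one _) ?_
      by_contra h
      push_neg at h
      exact h2a ((toZMod_eq_zero_iff _).mpr h)
    have heval_lt : ‖F.eval A‖ < 1 := by
      rw [← toZMod_eq_zero_iff]
      rw [hFeval, map_sub, map_pow, hAz, map_natCast, sq, ← ha, sub_self]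
    have hnorm : ‖F.eval A‖ < ‖F.derivative.eval A‖ ^ 2 := by
      rw [hder_norm]; simpa using heval_lt
    obtain ⟨Z, hZ0, -⟩ := hensels_lemma hnorm
    have hZsq : Z^2 = ((q:ℕ) : ℤ_[p]) := by
      have h := hZ0
      simp only [hFdef, Polynomial.coe_aeval_eq_eval, Polynomial.eval_sub, Polynomial.eval_pow, Polynomial.eval_X,
        Polynomial.eval_C, sub_eq_zero] at h
      exact h
    refine ⟨0, 1, (Z : ℚ_[p]), by simp, ?_⟩
    have hc : ((Z : ℚ_[p]))^2 = ((q:ℕ) : ℚ_[p]) := by exact_mod_cast congrArg _ hZsq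
    rw [hc]
    ring
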